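/- arXiv:1610.04583 — 4 statements merged into one kernel-verified Lean document; each statement's English description precedes it below -/
import Mathlib

section
/- Let γ_1,…,γ_m be nonnegative reals, let z_i ∈ ℂ^{d_i×d_i} for each i, and let h, g ∈ G. Then N_ρ((γ_i q_i(hg) + √γ_i z_i)_i) = ρ(h) · N_ρ((γ_i q_i(g) + √γ_i q_i(h⁻¹) z_i)_i), and D((γ_i q_i(hg) + √γ_i z_i)_i) = D((γ_i q_i(g) + √γ_i q_i(h⁻¹) z_i)_i). Consequently, whenever this common denominator is nonzero, F_ρ((γ_i q_i(hg) + √γ_i z_i)_i) = ρ(h) · F_ρ((γ_i q_i(g) + √γ_i q_i(h⁻¹) z_i)_i). -/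
open MeasureTheory Matrix

/-- Left-equivariance of the numerator `N_ρ`, invariance of the denominator `D`,
and hence left-equivariance of the MMSE map `F_ρ = N_ρ / D`, under the substitution
`(γᵢ qᵢ(hg) + √γᵢ zᵢ)ᵢ ↦ (γᵢ qᵢ(g) + √γᵢ qᵢ(h⁻¹) zᵢ)ᵢ`. -/
theorem statement0
    {G : Type*} [Group G] [TopologicalSpace G] [IsTopologicalGroup G] [CompactSpace G]
    [MeasurableSpace G] [BorelSpace G]
    (μ : Measure G) [μ.IsHaarMeasure] [IsProbabilityMeasure μ]
    {m : ℕ} (d : Fin m → ℕ)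
    (q : ∀ i : Fin m, G → Matrix (Fin (d i)) (Fin (d i)) ℂ)
    (hq_mul : ∀ i, ∀ a b : G, q i (a * b) = q i a * q i b)
    (hq_one : ∀ i, q i 1 = 1)
    (hq_unitary : ∀ i, ∀ g : G, (q i g)ᴴ * q i g = 1)
    (hq_cont : ∀ i, Continuous (q i))
    (i₀ : Fin m)
    -- the numerator `N_ρ(w) = ∫_G ρ(g) exp(Σᵢ ⟨wᵢ, qᵢ(g)⟩) dg`, entrywise
    (N : (∀ i : Fin m, Matrix (Fin (d i)) (Fin (d i)) ℂ) →
      Matrix (Fin (d i₀)) (Fin (d i₀)) ℂ)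
    (hN : ∀ w, N w = Matrix.of fun a b =>
      ∫ k, q i₀ k a b * Complex.exp (∑ i, (w i * (q i k)ᴴ).trace) ∂μ)
    -- the denominator `D(w) = ∫_G exp(Σᵢ ⟨wᵢ, qᵢ(g)⟩) dg`
    (D : (∀ i : Fin m, Matrix (Fin (d i)) (Fin (d i)) ℂ) → ℂ)
    (hD : ∀ w, D w = ∫ k, Complex.exp (∑ i, (w i * (q i k)ᴴ).trace) ∂μ)
    (γ : Fin m → ℝ) (hγ : ∀ i, 0 ≤ γ i)
    (z : ∀ i : Fin m, Matrix (Fin (d i)) (Fin (d i)) ℂ)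
    (h g : G)
    (w₁ w₂ : ∀ i : Fin m, Matrix (Fin (d i)) (Fin (d i)) ℂ)
    (hw₁ : ∀ i, w₁ i = ((γ i : ℂ) • q i (h * g)) + ((Real.sqrt (γ i) : ℂ) • z i))
    (hw₂ : ∀ i, w₂ i = ((γ i : ℂ) • q i g) + ((Real.sqrt (γ i) : ℂ) • (q i h⁻¹ * z i))) :
    N w₁ = q i₀ h * N w₂ ∧ D w₁ = D w₂ ∧
      (D w₁ ≠ 0 → (D w₁)⁻¹ • N w₁ = q i₀ h * ((D w₂)⁻¹ • N w₂)) := by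
  -- q maps inverses to conjugate transposes
  have hqinv : ∀ i (a : G), q i a⁻¹ = (q i a)ᴴ := by
    intro i a
    have h1 : q i a⁻¹ * q i a = 1 := by rw [← hq_mul, inv_mul_cancel, hq_one]
    have h3 : q i a * (q i a)ᴴ = 1 := mul_eq_one_comm.mp (hq_unitary i a)
    calc q i a⁻¹ = q i a⁻¹ * (q i a * (q i a)ᴴ) := by rw [h3, mul_one]
      _ = (q i a⁻¹ * q i a) * (q i a)ᴴ := by rw [mul_assoc]
      _ = (q i a)ᴴ := by rw [h1, one_mul]
  -- key trace identity
  have hkey : ∀ k : G, ∑ i, (w₁ i * (q i (h * k))ᴴ).trace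
      = ∑ i, (w₂ i * (q i k)ᴴ).trace := by
    intro k
    refine Finset.sum_congr rfl fun i _ => ?_
    rw [hw₁, hw₂, hq_mul i h k, Matrix.conjTranspose_mul]
    simp only [add_mul, Matrix.smul_mul, Matrix.trace_add, Matrix.trace_smul]
    congr 1
    · congr 1
      rw [hq_mul i h g, mul_assoc, Matrix.trace_mul_comm,
        mul_assoc, mul_assoc, hq_unitary i h, mul_one]
    · congr 1
      rw [hqinv, mul_assoc, ← mul_assoc (z i), Matrix.trace_mul_cycle,
        ← mul_assoc]
  -- continuity of the w₂–integrand pieces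
  have hexp : Continuous fun k : G => Complex.exp (∑ i, (w₂ i * (q i k)ᴴ).trace) := by
    refine Complex.continuous_exp.comp (continuous_finset_sum _ fun i _ => ?_)
    exact (continuous_const.matrix_mul (hq_cont i).matrix_conjTranspose).matrix_trace
  have hint : ∀ a b, Integrable
      (fun k : G => q i₀ k a b * Complex.exp (∑ i, (w₂ i * (q i k)ᴴ).trace)) μ := by
    intro a b
    have hc : Continuous fun k : G =>
        q i₀ k a b * Complex.exp (∑ i, (w₂ i * (q i k)ᴴ).trace) :=
      ((hq_cont i₀).matrix_elem a b).mul hexp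
    exact integrableOn_univ.mp
      (hc.continuousOn.integrableOn_compact' isCompact_univ MeasurableSet.univ)
  -- numerator equivariance
  have hNeq : N w₁ = q i₀ h * N w₂ := by
    rw [hN, hN]
    ext a b
    have hsub := integral_mul_left_eq_self
      (μ := μ) (fun k => q i₀ k a b * Complex.exp (∑ i, (w₁ i * (q i k)ᴴ).trace)) h
    rw [Matrix.mul_apply]
    simp only [Matrix.of_apply]
    rw [← hsub]
    have : ∀ k : G, q i₀ (h * k) a b * Complex.exp (∑ i, (w₁ i * (q i (h * k))ᴴ).trace)
        = ∑ c, q i₀ h a c * (q i₀ k c b * Complex.exp (∑ i, (w₂ i * (q i k)ᴴ).trace)) := by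
      intro k
      rw [hkey, hq_mul i₀ h k, Matrix.mul_apply, Finset.sum_mul]
      exact Finset.sum_congr rfl fun c _ => by ring
    simp_rw [this]
    rw [integral_finset_sum]
    · exact Finset.sum_congr rfl fun c _ => by
        rw [integral_const_mul]
    · exact fun c _ => (hint c b).const_mul _
  -- denominator invariance
  have hDeq : D w₁ = D w₂ := by
    rw [hD, hD]
    rw [← integral_mul_left_eq_self
      (μ := μ) (fun k => Complex.exp (∑ i, (w₁ i * (q i k)ᴴ).trace)) h]
    exact integral_congr_ae
      (Filter.Eventually.of_forall fun k => congrArg Complex.exp (hkey k))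
  refine ⟨hNeq, hDeq, fun hne => ?_⟩
  rw [hNeq, hDeq, Matrix.mul_smul]
end

section
/- Let γ_1,…,γ_m be nonnegative reals, let z_i ∈ ℂ^{d_i×d_i} for each i, and let h, g ∈ G. Then N_ρ((γ_i q_i(gh) + √γ_i z_i)_i) = N_ρ((γ_i q_i(g) + √γ_i z_i q_i(h⁻¹))_i) · ρ(h), and D((γ_i q_i(gh) + √γ_i z_i)_i) = D((γ_i q_i(g) + √γ_i z_i q_i(h⁻¹))_i). Consequently, whenever this common denominator is nonzero, F_ρ((γ_i q_i(gh) + √γ_i z_i)_i) = F_ρ((γ_i q_i(g) + √γ_i z_i q_i(h⁻¹))_i) · ρ(h). -/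
open MeasureTheory Matrix

private lemma cont_integrable_aux {X E : Type*} [TopologicalSpace X] [MeasurableSpace X]
    [OpensMeasurableSpace X] [CompactSpace X] [NormedAddCommGroup E]
    {μ : MeasureTheory.Measure X} [MeasureTheory.IsFiniteMeasure μ] {f : X → E}
    (hf : Continuous f) : MeasureTheory.Integrable f μ := by
  rw [← MeasureTheory.integrableOn_univ]
  exact ContinuousOn.integrableOn_compact' isCompact_univ MeasurableSet.univ hf.continuousOn


/-- Right-equivariance of the numerator `N_ρ`, invariance of the denominator `D`,
and hence right-equivariance of the MMSE map `F_ρ = N_ρ / D`, under the substitution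
`(γᵢ qᵢ(gh) + √γᵢ zᵢ)ᵢ ↦ (γᵢ qᵢ(g) + √γᵢ zᵢ qᵢ(h⁻¹))ᵢ`. -/
theorem statement1
    {G : Type*} [Group G] [TopologicalSpace G] [IsTopologicalGroup G] [CompactSpace G]
    [MeasurableSpace G] [BorelSpace G]
    (μ : Measure G) [μ.IsHaarMeasure] [IsProbabilityMeasure μ]
    {m : ℕ} (d : Fin m → ℕ)
    (q : ∀ i : Fin m, G → Matrix (Fin (d i)) (Fin (d i)) ℂ)
    (hq_mul : ∀ i, ∀ a b : G, q i (a * b) = q i a * q i b)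
    (hq_one : ∀ i, q i 1 = 1)
    (hq_unitary : ∀ i, ∀ g : G, (q i g)ᴴ * q i g = 1)
    (hq_cont : ∀ i, Continuous (q i))
    (i₀ : Fin m)
    -- the numerator `N_ρ(w) = ∫_G ρ(g) exp(Σᵢ ⟨wᵢ, qᵢ(g)⟩) dg`, entrywise
    (N : (∀ i : Fin m, Matrix (Fin (d i)) (Fin (d i)) ℂ) →
      Matrix (Fin (d i₀)) (Fin (d i₀)) ℂ)
    (hN : ∀ w, N w = Matrix.of fun a b =>
      ∫ k, q i₀ k a b * Complex.exp (∑ i, (w i * (q i k)ᴴ).trace) ∂μ)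
    -- the denominator `D(w) = ∫_G exp(Σᵢ ⟨wᵢ, qᵢ(g)⟩) dg`
    (D : (∀ i : Fin m, Matrix (Fin (d i)) (Fin (d i)) ℂ) → ℂ)
    (hD : ∀ w, D w = ∫ k, Complex.exp (∑ i, (w i * (q i k)ᴴ).trace) ∂μ)
    (γ : Fin m → ℝ) (hγ : ∀ i, 0 ≤ γ i)
    (z : ∀ i : Fin m, Matrix (Fin (d i)) (Fin (d i)) ℂ)
    (h g : G)
    (w₁ w₂ : ∀ i : Fin m, Matrix (Fin (d i)) (Fin (d i)) ℂ)
    (hw₁ : ∀ i, w₁ i = ((γ i : ℂ) • q i (g * h)) + ((Real.sqrt (γ i) : ℂ) • z i))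
    (hw₂ : ∀ i, w₂ i = ((γ i : ℂ) • q i g) + ((Real.sqrt (γ i) : ℂ) • (z i * q i h⁻¹))) :
    N w₁ = N w₂ * q i₀ h ∧ D w₁ = D w₂ ∧
      (D w₁ ≠ 0 → (D w₁)⁻¹ • N w₁ = ((D w₂)⁻¹ • N w₂) * q i₀ h) := by

  -- Haar measure on a compact group is right invariant
  haveI hri : μ.IsMulRightInvariant := by
    constructor
    intro h'
    haveI : IsProbabilityMeasure (Measure.map (· * h') μ) :=
      Measure.isProbabilityMeasure_map (measurable_mul_const h').aemeasurable
    exact Measure.isHaarMeasure_eq_of_isProbabilityMeasure _ μ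
  -- conjugate transpose is the inverse
  have hinv : ∀ i (a : G), (q i a)ᴴ = q i a⁻¹ := by
    intro i a
    have h1 : q i a⁻¹ * q i a = 1 := by rw [← hq_mul, inv_mul_cancel, hq_one]
    rw [← Matrix.inv_eq_left_inv (hq_unitary i a), ← Matrix.inv_eq_left_inv h1]
  have hcanc : ∀ i, q i h * q i h⁻¹ = 1 := by
    intro i; rw [← hq_mul, mul_inv_cancel, hq_one]
  -- key pointwise identity for the exponent
  have key : ∀ k : G, (∑ i, (w₁ i * (q i (k * h))ᴴ).trace)
      = ∑ i, (w₂ i * (q i k)ᴴ).trace := by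
    intro k
    refine Finset.sum_congr rfl fun i _ => ?_
    rw [hw₁, hw₂, hq_mul i k h, hq_mul i g h, Matrix.conjTranspose_mul, hinv i h]
    have e : q i g * q i h * (q i h⁻¹ * (q i k)ᴴ) = q i g * (q i k)ᴴ := by
      rw [mul_assoc, ← mul_assoc (q i h), hcanc, one_mul]
    simp only [Matrix.add_mul, Matrix.smul_mul, Matrix.trace_add, Matrix.trace_smul, e,
      mul_assoc]
  -- continuity of all integrands
  have E₂cont : Continuous fun k => Complex.exp (∑ i, (w₂ i * (q i k)ᴴ).trace) := by
    refine Complex.continuous_exp.comp ?_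
    exact continuous_finset_sum _ fun i _ =>
      (continuous_const.matrix_mul (hq_cont i).matrix_conjTranspose).matrix_trace
  have integ : ∀ (a c : Fin (d i₀)),
      Integrable (fun k => q i₀ k a c * Complex.exp (∑ i, (w₂ i * (q i k)ᴴ).trace)) μ := by
    intro a c
    exact cont_integrable_aux (((hq_cont i₀).matrix_elem a c).mul E₂cont)
  -- denominator invariance
  have hDeq : D w₁ = D w₂ := by
    rw [hD, hD, ← integral_mul_right_eq_self
      (fun k => Complex.exp (∑ i, (w₁ i * (q i k)ᴴ).trace)) h]
    simp only [key]
  -- numerator equivariance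
  have hNeq : N w₁ = N w₂ * q i₀ h := by
    rw [hN, hN]
    ext a b
    have step1 : (∫ k, q i₀ k a b * Complex.exp (∑ i, (w₁ i * (q i k)ᴴ).trace) ∂μ)
        = ∫ k, q i₀ (k * h) a b * Complex.exp (∑ i, (w₂ i * (q i k)ᴴ).trace) ∂μ := by
      rw [← integral_mul_right_eq_self
        (fun k => q i₀ k a b * Complex.exp (∑ i, (w₁ i * (q i k)ᴴ).trace)) h]
      simp only [key]
    have step2 : ∀ k : G, q i₀ (k * h) a b
        = ∑ c, q i₀ k a c * q i₀ h c b := by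
      intro k; rw [hq_mul]; rfl
    calc (Matrix.of fun a b =>
          ∫ k, q i₀ k a b * Complex.exp (∑ i, (w₁ i * (q i k)ᴴ).trace) ∂μ) a b
        = ∫ k, q i₀ (k * h) a b * Complex.exp (∑ i, (w₂ i * (q i k)ᴴ).trace) ∂μ := step1
      _ = ∫ k, ∑ c, q i₀ k a c * Complex.exp (∑ i, (w₂ i * (q i k)ᴴ).trace) * q i₀ h c b ∂μ := by
          congr 1; funext k
          rw [step2 k, Finset.sum_mul]
          refine Finset.sum_congr rfl fun c _ => by ring
      _ = ∑ c, ∫ k, q i₀ k a c * Complex.exp (∑ i, (w₂ i * (q i k)ᴴ).trace) * q i₀ h c b ∂μ := by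
          refine integral_finset_sum _ fun c _ => ?_
          exact (integ a c).mul_const _
      _ = ∑ c, (∫ k, q i₀ k a c * Complex.exp (∑ i, (w₂ i * (q i k)ᴴ).trace) ∂μ) * q i₀ h c b := by
          refine Finset.sum_congr rfl fun c _ => ?_
          exact integral_mul_const _ _
      _ = ((Matrix.of fun a b =>
            ∫ k, q i₀ k a b * Complex.exp (∑ i, (w₂ i * (q i k)ᴴ).trace) ∂μ) * q i₀ h) a b := rfl
  refine ⟨hNeq, hDeq, fun hne => ?_⟩
  rw [hNeq, hDeq, Matrix.smul_mul]
end

section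
/- For each i let ν_i be a Borel probability measure on ℂ^{d_i×d_i} such that for every h ∈ G the maps z ↦ q_i(h⁻¹) z and z ↦ z q_i(h⁻¹) are measure-preserving for ν_i, and let ν = ν_1 ⊗ ⋯ ⊗ ν_m be the product measure. Fix nonnegative reals γ_1,…,γ_m, assume that for every g ∈ G and ν-a.e. z one has D((γ_i q_i(g) + √γ_i z_i)_i) ≠ 0, and assume the function z ↦ F_ρ((γ_i q_i(g) + √γ_i z_i)_i) is Bochner integrable with respect to ν for every g ∈ G. Define f_ρ(g) := ∫ F_ρ((γ_i q_i(g) + √γ_i z_i)_i) dν(z) ∈ ℂ^{d×d}. Then for all g, h ∈ G: f_ρ(hg) = ρ(h) f_ρ(g) and f_ρ(gh) = f_ρ(g) ρ(h). -/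
open MeasureTheory Matrix
open scoped ENNReal NNReal

/-- Measurable-space structure on matrices (entrywise, i.e. the product σ-algebra). -/
instance matrixMeasurableSpace {m n α : Type*} [MeasurableSpace α] :
    MeasurableSpace (Matrix m n α) :=
  inferInstanceAs (MeasurableSpace (m → n → α))

/-- On a compact group, a Haar probability measure is right invariant. -/
lemma haar_prob_right_invariant {G : Type*} [Group G] [TopologicalSpace G] [IsTopologicalGroup G]
    [CompactSpace G] [MeasurableSpace G] [BorelSpace G]
    (μ : Measure G) [μ.IsHaarMeasure] [IsProbabilityMeasure μ] :
    μ.IsMulRightInvariant := by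
  constructor
  intro h
  have hmeas : Measurable (fun x : G => x * h) := measurable_mul_const h
  haveI : IsProbabilityMeasure (μ.map (· * h)) := Measure.isProbabilityMeasure_map hmeas.aemeasurable
  haveI hli : (μ.map (· * h)).IsMulLeftInvariant := by
    constructor
    intro g
    have h1 : ((fun x : G => g * x) ∘ fun x => x * h) = (fun x : G => x * h) ∘ fun x => g * x := by
      funext x; simp [mul_assoc]
    rw [Measure.map_map (measurable_const_mul g) hmeas, h1,
      ← Measure.map_map hmeas (measurable_const_mul g),
      map_mul_left_eq_self μ g]
  have hc := Measure.isMulInvariant_eq_smul_of_compactSpace (μ.map (· * h)) μ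
  have h1 : (Measure.haarScalarFactor (μ.map (· * h)) μ : ℝ≥0∞) = 1 := by
    have h2 := congrArg (fun ρ : Measure G => ρ Set.univ) hc
    simp only [measure_univ, Measure.smul_apply, ENNReal.smul_def, smul_eq_mul, mul_one] at h2
    exact h2.symm
  have h1' : Measure.haarScalarFactor (μ.map (· * h)) μ = 1 := by exact_mod_cast h1
  rw [hc, h1', one_smul]


set_option maxHeartbeats 2000000 in
/-- If each noise distribution `νᵢ` is invariant under left and right
multiplication by the unitaries `qᵢ(h⁻¹)`, then the averaged MMSE map
`f_ρ(g) = ∫ F_ρ((γᵢ qᵢ(g) + √γᵢ zᵢ)ᵢ) dν(z)` is both left- and right-equivariant: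
`f_ρ(hg) = ρ(h) f_ρ(g)` and `f_ρ(gh) = f_ρ(g) ρ(h)`. -/
theorem statement2
    {G : Type*} [Group G] [TopologicalSpace G] [IsTopologicalGroup G] [CompactSpace G]
    [MeasurableSpace G] [BorelSpace G]
    (μ : Measure G) [μ.IsHaarMeasure] [IsProbabilityMeasure μ]
    {m : ℕ} (d : Fin m → ℕ)
    (q : ∀ i : Fin m, G → Matrix (Fin (d i)) (Fin (d i)) ℂ)
    (hq_mul : ∀ i, ∀ a b : G, q i (a * b) = q i a * q i b)
    (hq_one : ∀ i, q i 1 = 1)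
    (hq_unitary : ∀ i, ∀ g : G, (q i g)ᴴ * q i g = 1)
    (hq_cont : ∀ i, Continuous (q i))
    (i₀ : Fin m)
    -- the numerator `N_ρ(w) = ∫_G ρ(g) exp(Σᵢ ⟨wᵢ, qᵢ(g)⟩) dg`, entrywise
    (N : (∀ i : Fin m, Matrix (Fin (d i)) (Fin (d i)) ℂ) →
      Matrix (Fin (d i₀)) (Fin (d i₀)) ℂ)
    (hN : ∀ w, N w = Matrix.of fun a b =>
      ∫ k, q i₀ k a b * Complex.exp (∑ i, (w i * (q i k)ᴴ).trace) ∂μ)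
    -- the denominator `D(w) = ∫_G exp(Σᵢ ⟨wᵢ, qᵢ(g)⟩) dg`
    (D : (∀ i : Fin m, Matrix (Fin (d i)) (Fin (d i)) ℂ) → ℂ)
    (hD : ∀ w, D w = ∫ k, Complex.exp (∑ i, (w i * (q i k)ᴴ).trace) ∂μ)
    -- the noise measures νᵢ, invariant under multiplication by the qᵢ(h⁻¹)
    (ν : ∀ i : Fin m, Measure (Matrix (Fin (d i)) (Fin (d i)) ℂ))
    (hνprob : ∀ i, IsProbabilityMeasure (ν i))
    (hν_left : ∀ i, ∀ h : G,
      MeasurePreserving (fun z => q i h⁻¹ * z) (ν i) (ν i))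
    (hν_right : ∀ i, ∀ h : G,
      MeasurePreserving (fun z => z * q i h⁻¹) (ν i) (ν i))
    (γ : Fin m → ℝ) (hγ : ∀ i, 0 ≤ γ i)
    -- the argument tuple `w(g, z)ᵢ = γᵢ qᵢ(g) + √γᵢ zᵢ`
    (w : G → (∀ i : Fin m, Matrix (Fin (d i)) (Fin (d i)) ℂ) →
      (∀ i : Fin m, Matrix (Fin (d i)) (Fin (d i)) ℂ))
    (hw : ∀ g z i, w g z i = ((γ i : ℂ) • q i g) + ((Real.sqrt (γ i) : ℂ) • z i))
    -- the denominator is a.e. nonzero, and `F_ρ(w(g, ·))` is integrable (entrywise)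
    (hDne : ∀ g : G, ∀ᵐ z ∂(Measure.pi ν), D (w g z) ≠ 0)
    (hInt : ∀ g : G, ∀ a b : Fin (d i₀),
      Integrable (fun z => (D (w g z))⁻¹ * N (w g z) a b) (Measure.pi ν))
    -- `f_ρ(g) = ∫ F_ρ(w(g, z)) dν(z)`, entrywise
    (f : G → Matrix (Fin (d i₀)) (Fin (d i₀)) ℂ)
    (hf : ∀ g, f g = Matrix.of fun a b =>
      ∫ z, (D (w g z))⁻¹ * N (w g z) a b ∂(Measure.pi ν)) :
    ∀ g h : G, f (h * g) = q i₀ h * f g ∧ f (g * h) = f g * q i₀ h := by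
  
  haveI := hνprob
  haveI : μ.IsMulRightInvariant := haar_prob_right_invariant μ
  -- the representations are unitary: `(q i h)ᴴ = q i h⁻¹`
  have hadj : ∀ (i : Fin m) (h : G), (q i h)ᴴ = q i h⁻¹ := by
    intro i h
    have h1 : q i h⁻¹ * q i h = 1 := by rw [← hq_mul, inv_mul_cancel, hq_one]
    have h1' : q i h * q i h⁻¹ = 1 := mul_eq_one_comm.mp h1
    calc (q i h)ᴴ = (q i h)ᴴ * (q i h * q i h⁻¹) := by rw [h1', mul_one]
      _ = ((q i h)ᴴ * q i h) * q i h⁻¹ := by rw [mul_assoc]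
      _ = q i h⁻¹ := by rw [hq_unitary, one_mul]
  -- trace identities
  have htrL : ∀ (i : Fin m) (v : Matrix (Fin (d i)) (Fin (d i)) ℂ) (h k : G),
      ((q i h * v) * (q i k)ᴴ).trace = (v * (q i (h⁻¹ * k))ᴴ).trace := by
    intro i v h k
    have e1 : (q i (h⁻¹ * k))ᴴ = (q i k)ᴴ * q i h := by
      rw [hq_mul, Matrix.conjTranspose_mul, hadj i h⁻¹, inv_inv]
    calc ((q i h * v) * (q i k)ᴴ).trace
        = (q i h * (v * (q i k)ᴴ)).trace := by rw [mul_assoc]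
      _ = ((v * (q i k)ᴴ) * q i h).trace := Matrix.trace_mul_comm _ _
      _ = (v * ((q i k)ᴴ * q i h)).trace := by rw [mul_assoc]
      _ = (v * (q i (h⁻¹ * k))ᴴ).trace := by rw [e1]
  have htrR : ∀ (i : Fin m) (v : Matrix (Fin (d i)) (Fin (d i)) ℂ) (h k : G),
      ((v * q i h) * (q i k)ᴴ).trace = (v * (q i (k * h⁻¹))ᴴ).trace := by
    intro i v h k
    have e1 : (q i (k * h⁻¹))ᴴ = q i h * (q i k)ᴴ := by
      rw [hq_mul, Matrix.conjTranspose_mul, hadj i h⁻¹, inv_inv]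
    rw [mul_assoc, e1]
  -- continuity & integrability of the group integrands
  have hcontE : ∀ (j : Fin m) (a b : Fin (d j)), Continuous fun k => q j k a b :=
    fun j a b => (hq_cont j).matrix_elem a b
  have hΦ : ∀ (v : ∀ i, Matrix (Fin (d i)) (Fin (d i)) ℂ),
      Continuous fun k => Complex.exp (∑ i, (v i * (q i k)ᴴ).trace) := by
    intro v
    refine Complex.continuous_exp.comp (continuous_finset_sum _ fun i _ => ?_)
    simp only [Matrix.trace, Matrix.diag, Matrix.mul_apply, Matrix.conjTranspose_apply]
    exact continuous_finset_sum _ fun a _ => continuous_finset_sum _ fun c _ =>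
      continuous_const.mul (continuous_star.comp (hcontE i a c))
  have hIntG : ∀ (v : ∀ i, Matrix (Fin (d i)) (Fin (d i)) ℂ) (c b' : Fin (d i₀)),
      Integrable (fun k => q i₀ k c b' * Complex.exp (∑ i, (v i * (q i k)ᴴ).trace)) μ :=
    fun v c b' => ((hcontE i₀ c b').mul (hΦ v)).integrable_of_hasCompactSupport
      (HasCompactSupport.of_compactSpace _)
  -- equivariance of D
  have hDL : ∀ (h : G) (v : ∀ i, Matrix (Fin (d i)) (Fin (d i)) ℂ),
      D (fun i => q i h * v i) = D v := by
    intro h v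
    simp only [hD]
    calc ∫ k, Complex.exp (∑ i, ((q i h * v i) * (q i k)ᴴ).trace) ∂μ
        = ∫ k, (fun x => Complex.exp (∑ i, (v i * (q i x)ᴴ).trace)) (h⁻¹ * k) ∂μ := by
          congr 1; funext k
          exact congrArg Complex.exp (Finset.sum_congr rfl fun i _ => htrL i (v i) h k)
      _ = ∫ k, Complex.exp (∑ i, (v i * (q i k)ᴴ).trace) ∂μ :=
          integral_mul_left_eq_self (fun x => Complex.exp (∑ i, (v i * (q i x)ᴴ).trace)) h⁻¹
  have hDR : ∀ (h : G) (v : ∀ i, Matrix (Fin (d i)) (Fin (d i)) ℂ),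
      D (fun i => v i * q i h) = D v := by
    intro h v
    simp only [hD]
    calc ∫ k, Complex.exp (∑ i, ((v i * q i h) * (q i k)ᴴ).trace) ∂μ
        = ∫ k, (fun x => Complex.exp (∑ i, (v i * (q i x)ᴴ).trace)) (k * h⁻¹) ∂μ := by
          congr 1; funext k
          exact congrArg Complex.exp (Finset.sum_congr rfl fun i _ => htrR i (v i) h k)
      _ = ∫ k, Complex.exp (∑ i, (v i * (q i k)ᴴ).trace) ∂μ :=
          integral_mul_right_eq_self (fun x => Complex.exp (∑ i, (v i * (q i x)ᴴ).trace)) h⁻¹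
  -- equivariance of N
  have hNL : ∀ (h : G) (v : ∀ i, Matrix (Fin (d i)) (Fin (d i)) ℂ) (a b : Fin (d i₀)),
      N (fun i => q i h * v i) a b = ∑ c, q i₀ h a c * N v c b := by
    intro h v a b
    simp only [hN, Matrix.of_apply]
    calc ∫ k, q i₀ k a b * Complex.exp (∑ i, ((q i h * v i) * (q i k)ᴴ).trace) ∂μ
        = ∫ k, (fun x => q i₀ (h * x) a b *
            Complex.exp (∑ i, (v i * (q i x)ᴴ).trace)) (h⁻¹ * k) ∂μ := by
          congr 1; funext k
          simp only [mul_inv_cancel_left]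
          exact congrArg (q i₀ k a b * ·)
            (congrArg Complex.exp (Finset.sum_congr rfl fun i _ => htrL i (v i) h k))
      _ = ∫ k, q i₀ (h * k) a b * Complex.exp (∑ i, (v i * (q i k)ᴴ).trace) ∂μ :=
          integral_mul_left_eq_self
            (fun x => q i₀ (h * x) a b * Complex.exp (∑ i, (v i * (q i x)ᴴ).trace)) h⁻¹
      _ = ∫ k, ∑ c, q i₀ h a c *
            (q i₀ k c b * Complex.exp (∑ i, (v i * (q i k)ᴴ).trace)) ∂μ := by
          congr 1; funext k
          rw [hq_mul, Matrix.mul_apply, Finset.sum_mul]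
          exact Finset.sum_congr rfl fun c _ => mul_assoc _ _ _
      _ = ∑ c, q i₀ h a c *
            ∫ k, q i₀ k c b * Complex.exp (∑ i, (v i * (q i k)ᴴ).trace) ∂μ := by
          rw [integral_finset_sum _ fun c _ => (hIntG v c b).const_mul _]
          exact Finset.sum_congr rfl fun c _ => integral_const_mul _ _
  have hNR : ∀ (h : G) (v : ∀ i, Matrix (Fin (d i)) (Fin (d i)) ℂ) (a b : Fin (d i₀)),
      N (fun i => v i * q i h) a b = ∑ c, N v a c * q i₀ h c b := by
    intro h v a b
    simp only [hN, Matrix.of_apply]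
    calc ∫ k, q i₀ k a b * Complex.exp (∑ i, ((v i * q i h) * (q i k)ᴴ).trace) ∂μ
        = ∫ k, (fun x => q i₀ (x * h) a b *
            Complex.exp (∑ i, (v i * (q i x)ᴴ).trace)) (k * h⁻¹) ∂μ := by
          congr 1; funext k
          simp only [inv_mul_cancel_right]
          exact congrArg (q i₀ k a b * ·)
            (congrArg Complex.exp (Finset.sum_congr rfl fun i _ => htrR i (v i) h k))
      _ = ∫ k, q i₀ (k * h) a b * Complex.exp (∑ i, (v i * (q i k)ᴴ).trace) ∂μ :=
          integral_mul_right_eq_self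
            (fun x => q i₀ (x * h) a b * Complex.exp (∑ i, (v i * (q i x)ᴴ).trace)) h⁻¹
      _ = ∫ k, ∑ c, (q i₀ k a c * Complex.exp (∑ i, (v i * (q i k)ᴴ).trace)) *
            q i₀ h c b ∂μ := by
          congr 1; funext k
          rw [hq_mul, Matrix.mul_apply, Finset.sum_mul]
          exact Finset.sum_congr rfl fun c _ => mul_right_comm _ _ _
      _ = ∑ c, (∫ k, q i₀ k a c * Complex.exp (∑ i, (v i * (q i k)ᴴ).trace) ∂μ) *
            q i₀ h c b := by
          rw [integral_finset_sum _ fun c _ => (hIntG v a c).mul_const _]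
          exact Finset.sum_congr rfl fun c _ => integral_mul_const _ _
  -- measure-preserving maps on the product noise space
  have hTL : ∀ h : G, MeasurePreserving (fun (z : ∀ i, Matrix (Fin (d i)) (Fin (d i)) ℂ)
      (i : Fin m) => q i h * z i) (Measure.pi ν) (Measure.pi ν) := by
    intro h
    refine measurePreserving_pi (f := fun i x => q i h * x) ν ν fun i => ?_
    have := hν_left i h⁻¹
    rwa [inv_inv] at this
  have hTR : ∀ h : G, MeasurePreserving (fun (z : ∀ i, Matrix (Fin (d i)) (Fin (d i)) ℂ)
      (i : Fin m) => z i * q i h) (Measure.pi ν) (Measure.pi ν) := by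
    intro h
    refine measurePreserving_pi (f := fun i x => x * q i h) ν ν fun i => ?_
    have := hν_right i h⁻¹
    rwa [inv_inv] at this
  -- behavior of `w` under the translations
  have hwL : ∀ (g h : G) (z : ∀ i, Matrix (Fin (d i)) (Fin (d i)) ℂ),
      w (h * g) (fun i => q i h * z i) = fun i => q i h * w g z i := by
    intro g h z; funext i
    simp only [hw, hq_mul, mul_add, Matrix.mul_smul]
  have hwR : ∀ (g h : G) (z : ∀ i, Matrix (Fin (d i)) (Fin (d i)) ℂ),
      w (g * h) (fun i => z i * q i h) = fun i => w g z i * q i h := by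
    intro g h z; funext i
    simp only [hw, hq_mul, add_mul, Matrix.smul_mul, mul_assoc]
  intro g h
  constructor
  · -- left equivariance
    ext a b
    have main : (∫ z, (D (w (h * g) z))⁻¹ * N (w (h * g) z) a b ∂(Measure.pi ν))
        = ∑ c, q i₀ h a c * ∫ z, (D (w g z))⁻¹ * N (w g z) c b ∂(Measure.pi ν) := by
      calc (∫ z, (D (w (h * g) z))⁻¹ * N (w (h * g) z) a b ∂(Measure.pi ν))
          = ∫ z, (D (w (h * g) (fun i => q i h * z i)))⁻¹ *
              N (w (h * g) (fun i => q i h * z i)) a b ∂(Measure.pi ν) := by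
            conv_lhs => rw [← (hTL h).map_eq]
            exact integral_map (hTL h).measurable.aemeasurable
              (by rw [(hTL h).map_eq]; exact (hInt (h * g) a b).1)
        _ = ∫ z, ∑ c, q i₀ h a c * ((D (w g z))⁻¹ * N (w g z) c b) ∂(Measure.pi ν) := by
            congr 1; funext z
            rw [hwL g h z, hDL h (w g z), hNL h (w g z) a b, Finset.mul_sum]
            exact Finset.sum_congr rfl fun c _ => mul_left_comm _ _ _
        _ = ∑ c, q i₀ h a c * ∫ z, (D (w g z))⁻¹ * N (w g z) c b ∂(Measure.pi ν) := by
            rw [integral_finset_sum _ fun c _ => (hInt g c b).const_mul _]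
            exact Finset.sum_congr rfl fun c _ => integral_const_mul _ _
    simpa [hf, Matrix.mul_apply] using main
  · -- right equivariance
    ext a b
    have main : (∫ z, (D (w (g * h) z))⁻¹ * N (w (g * h) z) a b ∂(Measure.pi ν))
        = ∑ c, (∫ z, (D (w g z))⁻¹ * N (w g z) a c ∂(Measure.pi ν)) * q i₀ h c b := by
      calc (∫ z, (D (w (g * h) z))⁻¹ * N (w (g * h) z) a b ∂(Measure.pi ν))
          = ∫ z, (D (w (g * h) (fun i => z i * q i h)))⁻¹ *
              N (w (g * h) (fun i => z i * q i h)) a b ∂(Measure.pi ν) := by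
            conv_lhs => rw [← (hTR h).map_eq]
            exact integral_map (hTR h).measurable.aemeasurable
              (by rw [(hTR h).map_eq]; exact (hInt (g * h) a b).1)
        _ = ∫ z, ∑ c, ((D (w g z))⁻¹ * N (w g z) a c) * q i₀ h c b ∂(Measure.pi ν) := by
            congr 1; funext z
            rw [hwR g h z, hDR h (w g z), hNR h (w g z) a b, Finset.mul_sum]
            exact Finset.sum_congr rfl fun c _ => (mul_assoc _ _ _).symm
        _ = ∑ c, (∫ z, (D (w g z))⁻¹ * N (w g z) a c ∂(Measure.pi ν)) * q i₀ h c b := by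
            rw [integral_finset_sum _ fun c _ => (hInt g a c).mul_const _]
            exact Finset.sum_congr rfl fun c _ => integral_mul_const _ _
    simpa [hf, Matrix.mul_apply] using main
end

section
/- Define r(t) := (∫_0^{2π} cos θ · e^{2t cos θ} dθ) / (∫_0^{2π} e^{2t cos θ} dθ) for t ≥ 0 (the denominator is strictly positive). Then for every t ≥ 0 one has 0 ≤ r(t) < 1, and for every nonzero c ∈ ℂ, the denominator D(c) := ∫_0^{2π} exp(2 Re(conj(c) e^{iθ})) dθ is strictly positive and (1/D(c)) ∫_0^{2π} e^{iθ} exp(2 Re(conj(c) e^{iθ})) dθ = (c/|c|) · r(|c|). In other words, the normalized averaging map preserves the phase of c and maps its magnitude into [0,1) via the ratio r (which equals the ratio I_1(2t)/I_0(2t) of modified Bessel functions of the first kind). -/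
open MeasureTheory intervalIntegral

lemma st6_contE (t : ℝ) : Continuous fun θ : ℝ => Real.exp (2 * t * Real.cos θ) := by
  continuity

lemma st6_contCE (t : ℝ) : Continuous fun θ : ℝ => Real.cos θ * Real.exp (2 * t * Real.cos θ) := by
  continuity

lemma st6_contSE (t : ℝ) : Continuous fun θ : ℝ => Real.sin θ * Real.exp (2 * t * Real.cos θ) := by
  continuity

lemma st6_denPos (t : ℝ) :
    0 < ∫ θ in (0:ℝ)..(2 * Real.pi), Real.exp (2 * t * Real.cos θ) := by
  apply intervalIntegral.intervalIntegral_pos_of_pos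
  · exact (st6_contE t).intervalIntegrable 0 (2 * Real.pi)
  · intro x; exact Real.exp_pos _
  · positivity

lemma st6_numNonneg (t : ℝ) (ht : 0 ≤ t) :
    0 ≤ ∫ θ in (0:ℝ)..(2 * Real.pi), Real.cos θ * Real.exp (2 * t * Real.cos θ) := by
  set f : ℝ → ℝ := fun θ => Real.cos θ * Real.exp (2 * t * Real.cos θ) with hf
  have hcf : Continuous f := st6_contCE t
  have hsplit : (∫ θ in (0:ℝ)..(2 * Real.pi), f θ)
      = (∫ θ in (0:ℝ)..Real.pi, f θ) + ∫ θ in Real.pi..(2 * Real.pi), f θ := by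
    rw [intervalIntegral.integral_add_adjacent_intervals
      (hcf.intervalIntegrable _ _) (hcf.intervalIntegrable _ _)]
  have h2 : (∫ θ in Real.pi..(2 * Real.pi), f θ) = ∫ θ in (0:ℝ)..Real.pi, f θ := by
    have := intervalIntegral.integral_comp_sub_left (a := (0:ℝ)) (b := Real.pi) f (2 * Real.pi)
    have heq : ∀ x : ℝ, f (2 * Real.pi - x) = f x := by
      intro x
      simp [hf, Real.cos_sub, Real.cos_two_pi, Real.sin_two_pi]
    simp only [heq] at this
    rw [show 2*Real.pi - Real.pi = Real.pi by ring, show 2*Real.pi - 0 = 2*Real.pi by ring] at this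
    exact this.symm
  have h3 : (∫ θ in (0:ℝ)..Real.pi, f θ)
      = (∫ θ in (0:ℝ)..(Real.pi/2), f θ) + ∫ θ in (Real.pi/2)..Real.pi, f θ := by
    rw [intervalIntegral.integral_add_adjacent_intervals
      (hcf.intervalIntegrable _ _) (hcf.intervalIntegrable _ _)]
  have h4 : (∫ θ in (Real.pi/2)..Real.pi, f θ)
      = ∫ x in (0:ℝ)..(Real.pi/2), (- Real.cos x) * Real.exp (2 * t * (- Real.cos x)) := by
    have := intervalIntegral.integral_comp_sub_left (a := (0:ℝ)) (b := Real.pi/2) f Real.pi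
    have heq : ∀ x : ℝ, f (Real.pi - x)
        = (- Real.cos x) * Real.exp (2 * t * (- Real.cos x)) := by
      intro x; simp [hf, Real.cos_pi_sub]
    simp only [heq] at this
    rw [show Real.pi - Real.pi/2 = Real.pi/2 by ring, show Real.pi - 0 = Real.pi by ring] at this
    exact this.symm
  have h5 : 0 ≤ ∫ θ in (0:ℝ)..Real.pi, f θ := by
    rw [h3, h4, ← intervalIntegral.integral_add (hcf.intervalIntegrable _ _)
      ((by continuity : Continuous
        (fun x : ℝ => (- Real.cos x) * Real.exp (2 * t * (- Real.cos x)))).intervalIntegrable _ _)]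
    apply intervalIntegral.integral_nonneg (by positivity)
    intro x hx
    have hc : 0 ≤ Real.cos x := by
      apply Real.cos_nonneg_of_mem_Icc
      constructor
      · linarith [hx.1, Real.pi_pos]
      · exact hx.2
    have hle : Real.exp (2 * t * (- Real.cos x)) ≤ Real.exp (2 * t * Real.cos x) := by
      apply Real.exp_le_exp.mpr; nlinarith
    simp only [hf]
    nlinarith [Real.exp_pos (2 * t * (- Real.cos x))]
  rw [hsplit, h2]
  linarith

lemma st6_numLtDen (t : ℝ) :
    (∫ θ in (0:ℝ)..(2 * Real.pi), Real.cos θ * Real.exp (2 * t * Real.cos θ)) <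
    ∫ θ in (0:ℝ)..(2 * Real.pi), Real.exp (2 * t * Real.cos θ) := by
  rw [← sub_pos, ← intervalIntegral.integral_sub ((st6_contE t).intervalIntegrable _ _)
    ((st6_contCE t).intervalIntegrable _ _)]
  apply intervalIntegral.intervalIntegral_pos_of_pos_on
  · exact ((st6_contE t).sub (st6_contCE t)).intervalIntegrable _ _
  · intro x hx
    have h1 : Real.cos x ≠ 1 := by
      intro h
      have := (Real.cos_eq_one_iff_of_lt_of_lt (x := x) (by linarith [hx.1, Real.pi_pos]) hx.2).mp h
      linarith [hx.1]
    have h2 : Real.cos x < 1 := lt_of_le_of_ne (Real.cos_le_one x) h1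
    nlinarith [Real.exp_pos (2 * t * Real.cos x)]
  · positivity

lemma st6_sinIntZero (t : ℝ) :
    (∫ θ in (0:ℝ)..(2 * Real.pi), Real.sin θ * Real.exp (2 * t * Real.cos θ)) = 0 := by
  set f : ℝ → ℝ := fun θ => Real.sin θ * Real.exp (2 * t * Real.cos θ) with hf
  have hcf : Continuous f := st6_contSE t
  have hsplit : (∫ θ in (0:ℝ)..(2 * Real.pi), f θ)
      = (∫ θ in (0:ℝ)..Real.pi, f θ) + ∫ θ in Real.pi..(2 * Real.pi), f θ := by
    rw [intervalIntegral.integral_add_adjacent_intervals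
      (hcf.intervalIntegrable _ _) (hcf.intervalIntegrable _ _)]
  have h2 : (∫ θ in Real.pi..(2 * Real.pi), f θ) = - ∫ θ in (0:ℝ)..Real.pi, f θ := by
    have := intervalIntegral.integral_comp_sub_left (a := (0:ℝ)) (b := Real.pi) f (2 * Real.pi)
    have heq : ∀ x : ℝ, f (2 * Real.pi - x) = - f x := by
      intro x
      simp [hf, Real.sin_sub, Real.cos_sub, Real.cos_two_pi, Real.sin_two_pi]
    simp only [heq] at this
    rw [intervalIntegral.integral_neg] at this
    rw [show 2*Real.pi - Real.pi = Real.pi by ring, show 2*Real.pi - 0 = 2*Real.pi by ring] at this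
    exact this.symm
  rw [hsplit, h2]; ring

lemma st6_re (c : ℂ) (hc : c ≠ 0) (θ : ℝ) :
    ((starRingEnd ℂ) c * Complex.exp (θ * Complex.I)).re
      = ‖c‖ * Real.cos (θ - Complex.arg c) := by
  have h1 : Real.cos (Complex.arg c) = c.re / ‖c‖ := Complex.cos_arg hc
  have h2 : Real.sin (Complex.arg c) = c.im / ‖c‖ := Complex.sin_arg c
  have ht : (‖c‖ : ℝ) ≠ 0 := by simpa using hc
  rw [Real.cos_sub, h1, h2]
  simp only [Complex.mul_re, Complex.conj_re, Complex.conj_im,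
    Complex.exp_ofReal_mul_I_re, Complex.exp_ofReal_mul_I_im]
  field_simp
  ring

lemma st6_D (c : ℂ) (hc : c ≠ 0) :
    (∫ θ in (0:ℝ)..(2 * Real.pi),
        Real.exp (2 * ((starRingEnd ℂ) c * Complex.exp (θ * Complex.I)).re))
    = ∫ θ in (0:ℝ)..(2 * Real.pi), Real.exp (2 * ‖c‖ * Real.cos θ) := by
  set t := ‖c‖
  set φ := Complex.arg c
  have heq : ∀ θ : ℝ, Real.exp (2 * ((starRingEnd ℂ) c * Complex.exp (θ * Complex.I)).re)
      = (fun u : ℝ => Real.exp (2 * t * Real.cos u)) (θ - φ) := by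
    intro θ; rw [st6_re c hc θ]; ring_nf; rfl
  simp only [heq]
  rw [intervalIntegral.integral_comp_sub_right (fun u : ℝ => Real.exp (2 * t * Real.cos u)) φ]
  have hper : Function.Periodic (fun u : ℝ => Real.exp (2 * t * Real.cos u)) (2 * Real.pi) :=
    fun u => by simp [Real.cos_add_two_pi]
  have h := hper.intervalIntegral_add_eq (0 - φ) 0
  rw [show (0:ℝ) - φ + 2 * Real.pi = 2 * Real.pi - φ by ring, zero_add] at h
  exact h

lemma st6_N (c : ℂ) (hc : c ≠ 0) :
    (∫ θ in (0:ℝ)..(2 * Real.pi),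
        Complex.exp (θ * Complex.I) *
          Complex.exp (2 * ((((starRingEnd ℂ) c * Complex.exp (θ * Complex.I)).re : ℝ) : ℂ)))
    = Complex.exp (Complex.arg c * Complex.I) *
        ((∫ θ in (0:ℝ)..(2 * Real.pi),
          Real.cos θ * Real.exp (2 * ‖c‖ * Real.cos θ) : ℝ) : ℂ) := by
  set t := ‖c‖ with htdef
  set φ := Complex.arg c with hφdef
  set g : ℝ → ℂ := fun u =>
    Complex.exp (φ * Complex.I) *
      (Complex.exp (u * Complex.I) * ((Real.exp (2 * t * Real.cos u) : ℝ) : ℂ)) with hg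
  have heq : ∀ θ : ℝ, Complex.exp (θ * Complex.I) *
        Complex.exp (2 * ((((starRingEnd ℂ) c * Complex.exp (θ * Complex.I)).re : ℝ) : ℂ))
      = g (θ - φ) := by
    intro θ
    rw [st6_re c hc θ]
    simp only [hg]
    rw [Complex.ofReal_exp, ← Complex.exp_add, ← Complex.exp_add, ← Complex.exp_add]
    congr 1
    push_cast
    ring
  simp only [heq]
  rw [intervalIntegral.integral_comp_sub_right g φ]
  have hper : Function.Periodic g (2 * Real.pi) := by
    intro u
    have h1 : Complex.exp (((u + 2 * Real.pi : ℝ) : ℂ) * Complex.I)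
        = Complex.exp ((u : ℂ) * Complex.I) := by
      push_cast
      rw [add_mul, Complex.exp_add, Complex.exp_two_pi_mul_I, mul_one]
    simp only [hg, Real.cos_add_two_pi, h1]
  have hshift := hper.intervalIntegral_add_eq (0 - φ) 0
  rw [show (0:ℝ) - φ + 2 * Real.pi = 2 * Real.pi - φ by ring, zero_add] at hshift
  rw [hshift]
  have hsplit : ∀ u : ℝ, g u = Complex.exp (φ * Complex.I) *
      (((Real.cos u * Real.exp (2 * t * Real.cos u) : ℝ) : ℂ)
        + ((Real.sin u * Real.exp (2 * t * Real.cos u) : ℝ) : ℂ) * Complex.I) := by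
    intro u
    simp only [hg]
    congr 1
    rw [Complex.exp_mul_I]
    push_cast
    ring
  simp only [hsplit]
  rw [intervalIntegral.integral_const_mul]
  congr 1
  rw [intervalIntegral.integral_add, intervalIntegral.integral_mul_const,
    intervalIntegral.integral_ofReal, intervalIntegral.integral_ofReal,
    st6_sinIntZero t]
  · simp
  · apply Continuous.intervalIntegrable
    continuity
  · apply Continuous.intervalIntegrable
    continuity

/-- The AMP soft-projection for `U(1)` synchronization with one frequency.
With `r(t) = (∫₀^{2π} cos θ e^{2t cos θ} dθ)/(∫₀^{2π} e^{2t cos θ} dθ)` one has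
`0 ≤ r(t) < 1` for `t ≥ 0` (and the denominator is strictly positive); and for every
nonzero `c ∈ ℂ`, `D(c) = ∫₀^{2π} exp(2 Re(conj(c) e^{iθ})) dθ > 0` and
`(1/D(c)) ∫₀^{2π} e^{iθ} exp(2 Re(conj(c) e^{iθ})) dθ = (c/|c|) · r(|c|)`. -/
theorem statement6
    (r : ℝ → ℝ)
    (hr : ∀ t : ℝ, r t =
      (∫ θ in (0:ℝ)..(2 * Real.pi), Real.cos θ * Real.exp (2 * t * Real.cos θ)) /
      (∫ θ in (0:ℝ)..(2 * Real.pi), Real.exp (2 * t * Real.cos θ)))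
    (D : ℂ → ℝ)
    (hD : ∀ c : ℂ, D c =
      ∫ θ in (0:ℝ)..(2 * Real.pi),
        Real.exp (2 * ((starRingEnd ℂ) c * Complex.exp (θ * Complex.I)).re)) :
    (∀ t : ℝ, 0 ≤ t →
      0 < ∫ θ in (0:ℝ)..(2 * Real.pi), Real.exp (2 * t * Real.cos θ)) ∧
    (∀ t : ℝ, 0 ≤ t → 0 ≤ r t ∧ r t < 1) ∧
    (∀ c : ℂ, c ≠ 0 → 0 < D c ∧
      (1 / (D c : ℂ)) *
        (∫ θ in (0:ℝ)..(2 * Real.pi),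
          Complex.exp (θ * Complex.I) *
            Complex.exp (2 * ((((starRingEnd ℂ) c * Complex.exp (θ * Complex.I)).re : ℝ) : ℂ)))
      = (c / ((‖c‖ : ℝ) : ℂ)) * ((r ‖c‖ : ℝ) : ℂ)) := by
  refine ⟨fun t _ => st6_denPos t, fun t ht => ?_, fun c hc => ?_⟩
  · rw [hr]
    refine ⟨div_nonneg (st6_numNonneg t ht) (st6_denPos t).le, ?_⟩
    rw [div_lt_one (st6_denPos t)]
    exact st6_numLtDen t
  · have hDc : D c = ∫ θ in (0:ℝ)..(2 * Real.pi),
        Real.exp (2 * ‖c‖ * Real.cos θ) := by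
      rw [hD]; exact st6_D c hc
    refine ⟨by rw [hDc]; exact st6_denPos _, ?_⟩
    rw [st6_N c hc, hDc, hr]
    have hden := st6_denPos (‖c‖)
    have habs : ((‖c‖ : ℝ) : ℂ) ≠ 0 := by
      simpa using hc
    have h1 : (c / ((‖c‖ : ℝ) : ℂ)) = Complex.exp (Complex.arg c * Complex.I) := by
      rw [div_eq_iff habs, mul_comm]
      exact (Complex.norm_mul_exp_arg_mul_I c).symm
    rw [h1, Complex.ofReal_div]
    have hdne : ((∫ θ in (0:ℝ)..(2 * Real.pi),
        Real.exp (2 * ‖c‖ * Real.cos θ) : ℝ) : ℂ) ≠ 0 :=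
      Complex.ofReal_ne_zero.mpr hden.ne'
    field_simp
end
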